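/- Suppose W : Λ_A → ℝ≥0 satisfies the Keane condition Σ_{j : A_{j x_1}=1} W(σ_j(x)) = 1 for all x. For x ∈ Λ_A define P^W_x on cylinders of Λ_{A^t} by P^W_x(Λ_{k,A^t}(a)) = A_{a_1 x_1} W(σ_{a_1}(x)) W(σ_{a_2}σ_{a_1}(x)) ⋯ W(σ_{a_k}⋯σ_{a_1}(x)) for a with a^t = (a_k,…,a_1) admissible for A. Then P^W_x is consistently defined: P^W_x(Λ_{k,A^t}(a)) = Σ_j (A^t)_{a_k j} P^W_x(Λ_{k+1,A^t}(aj)), and hence extends to a Borel measure on Λ_{A^t}. -/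

import Mathlib

open MeasureTheory
open scoped BigOperators ENNReal

/-- Prepending a letter to a one-sided infinite word (the map `σ_j(w) = jw`). -/
def prepend {N : ℕ} (j : Fin N) (w : ℕ → Fin N) : ℕ → Fin N :=
  fun n => match n with
  | 0 => j
  | Nat.succ m => w m

/-- The product `W(σ_{a_1}(x)) W(σ_{a_2}σ_{a_1}(x)) ⋯ W(σ_{a_k}⋯σ_{a_1}(x))` for a word
`a = [a_1,…,a_k]`. -/
def prodW {N : ℕ} (W : (ℕ → Fin N) → ℝ) : (ℕ → Fin N) → List (Fin N) → ℝ
  | _, [] => 1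
  | x, j :: l => W (prepend j x) * prodW W (prepend j x) l

/-- The value `P^W_x(Λ_{k,A^t}(a)) = A_{a_1 x_1} W(σ_{a_1}(x)) ⋯ W(σ_{a_k}⋯σ_{a_1}(x))`. -/
def PW {N : ℕ} (A : Fin N → Fin N → ℕ) (W : (ℕ → Fin N) → ℝ)
    (x : ℕ → Fin N) : List (Fin N) → ℝ
  | [] => 1
  | j :: l => (A j (x 0) : ℝ) * prodW W x (j :: l)

section RW
variable {N : ℕ} (hN : 0 < N) (A : Fin N → Fin N → ℕ) (W : (ℕ → Fin N) → ℝ)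

def rwMemL (z : ℕ → Fin N) : Prop := ∀ n, A (z n) (z (n + 1)) = 1

def rwq (z : ℕ → Fin N) (j : Fin N) : ℝ := (A j (z 0) : ℝ) * W (prepend j z)

def rwqq (z : ℕ → Fin N) (i : ℕ) : ℝ := if h : i < N then rwq A W z ⟨i, h⟩ else 0

def rwS (z : ℕ → Fin N) (k : ℕ) : ℝ := ∑ i ∈ Finset.range k, rwqq A W z i

noncomputable def rwsel (z : ℕ → Fin N) (t : ℝ) : Fin N :=
  if h : ∃ j : ℕ, j < N ∧ rwS A W z j ≤ t ∧ t < rwS A W z (j+1)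
  then ⟨h.choose, h.choose_spec.1⟩ else ⟨0, hN⟩

noncomputable def rwstate (z : ℕ → Fin N) (t : ℝ) : ℕ → (ℕ → Fin N) × ℝ
  | 0 => (z, t)
  | n+1 =>
      let p := rwstate z t n
      let j := rwsel hN A W p.1 p.2
      (prepend j p.1, (p.2 - rwS A W p.1 j) / rwq A W p.1 j)

noncomputable def rwF (z : ℕ → Fin N) (t : ℝ) (n : ℕ) : Fin N :=
  (rwstate hN A W z t (n+1)).1 0

def rwoff : (ℕ → Fin N) → List (Fin N) → ℝ
  | _, [] => 0
  | z, j :: l => rwS A W z j + rwq A W z j * rwoff (prepend j z) l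

def rwpr : (ℕ → Fin N) → List (Fin N) → ℝ
  | _, [] => 1
  | z, j :: l => rwq A W z j * rwpr (prepend j z) l


variable {A} {W}

lemma rwq_nonneg (hW : ∀ y, 0 ≤ W y) (z : ℕ → Fin N) (j : Fin N) : 0 ≤ rwq A W z j :=
  mul_nonneg (Nat.cast_nonneg _) (hW _)

lemma rwqq_nonneg (hW : ∀ y, 0 ≤ W y) (z : ℕ → Fin N) (i : ℕ) : 0 ≤ rwqq A W z i := by
  unfold rwqq; split
  · exact rwq_nonneg hW _ _
  · exact le_refl _

lemma rwS_nonneg (hW : ∀ y, 0 ≤ W y) (z : ℕ → Fin N) (k : ℕ) : 0 ≤ rwS A W z k :=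
  Finset.sum_nonneg fun i _ => rwqq_nonneg hW z i

lemma rwS_succ (z : ℕ → Fin N) (k : ℕ) : rwS A W z (k+1) = rwS A W z k + rwqq A W z k := by
  simp [rwS, Finset.sum_range_succ]

lemma rwqq_coe (z : ℕ → Fin N) (j : Fin N) : rwqq A W z j.val = rwq A W z j := by
  simp [rwqq, j.isLt]

lemma rwS_succ_fin (z : ℕ → Fin N) (j : Fin N) :
    rwS A W z (j.val + 1) = rwS A W z j.val + rwq A W z j := by
  rw [rwS_succ, rwqq_coe]

lemma rwS_mono (hW : ∀ y, 0 ≤ W y) (z : ℕ → Fin N) {m n : ℕ} (h : m ≤ n) :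
    rwS A W z m ≤ rwS A W z n := by
  refine Finset.sum_le_sum_of_subset_of_nonneg (Finset.range_subset_range.2 h) ?_
  exact fun i _ _ => rwqq_nonneg hW z i

lemma rwS_total (hK : ∀ y, rwMemL A y → ∑ j, rwq A W y j = 1)
    (z : ℕ → Fin N) (hz : rwMemL A z) : rwS A W z N = 1 := by
  rw [rwS, ← Fin.sum_univ_eq_sum_range (fun i => rwqq A W z i)]
  rw [← hK z hz]
  exact Finset.sum_congr rfl fun j _ => rwqq_coe z j

lemma prepend_zero (j : Fin N) (z : ℕ → Fin N) : prepend j z 0 = j := rfl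
lemma prepend_succ (j : Fin N) (z : ℕ → Fin N) (n : ℕ) : prepend j z (n+1) = z n := rfl

lemma rwMemL_prepend {z : ℕ → Fin N} (hz : rwMemL A z) {j : Fin N}
    (hj : A j (z 0) = 1) : rwMemL A (prepend j z) := by
  intro n
  cases n with
  | zero => exact hj
  | succ m => exact hz m

lemma A_one_of_rwq_ne (hA : ∀ i j, A i j = 0 ∨ A i j = 1) {z : ℕ → Fin N} {j : Fin N}
    (h : rwq A W z j ≠ 0) : A j (z 0) = 1 := by
  rcases hA j (z 0) with h0 | h1
  · exfalso; apply h; simp [rwq, h0]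
  · exact h1

lemma rwsel_exists (hW : ∀ y, 0 ≤ W y) (hK : ∀ y, rwMemL A y → ∑ j, rwq A W y j = 1)
    {z : ℕ → Fin N} (hz : rwMemL A z) {t : ℝ} (h0 : 0 ≤ t) (h1 : t < 1) :
    ∃ j : ℕ, j < N ∧ rwS A W z j ≤ t ∧ t < rwS A W z (j+1) := by
  have hPN : t < rwS A W z N := by rw [rwS_total hK z hz]; exact h1
  classical
  have hex : ∃ k, t < rwS A W z k := ⟨N, hPN⟩
  let k := Nat.find hex
  have hk : t < rwS A W z k := Nat.find_spec hex
  have hk0 : k ≠ 0 := by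
    intro h
    rw [h] at hk
    simp only [rwS, Finset.range_zero, Finset.sum_empty] at hk
    linarith
  obtain ⟨m, hm⟩ := Nat.exists_eq_succ_of_ne_zero hk0
  refine ⟨m, ?_, ?_, ?_⟩
  · by_contra hmN
    push_neg at hmN
    have : rwS A W z N ≤ rwS A W z m := rwS_mono hW z hmN
    have hlt : ¬ t < rwS A W z m := Nat.find_min hex (by omega)
    push_neg at hlt
    linarith
  · have hlt : ¬ t < rwS A W z m := Nat.find_min hex (by omega)
    push_neg at hlt; exact hlt
  · have : m + 1 = k := by omega
    rw [this]; exact hk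

lemma rwsel_unique (hW : ∀ y, 0 ≤ W y) {z : ℕ → Fin N} {t : ℝ} {j j' : ℕ}
    (hj : rwS A W z j ≤ t ∧ t < rwS A W z (j+1))
    (hj' : rwS A W z j' ≤ t ∧ t < rwS A W z (j'+1)) : j = j' := by
  by_contra hne
  rcases Nat.lt_or_ge j j' with h | h
  · have : rwS A W z (j+1) ≤ rwS A W z j' := rwS_mono hW z h
    linarith [hj.2, hj'.1]
  · have hlt : j' < j := by omega
    have : rwS A W z (j'+1) ≤ rwS A W z j := rwS_mono hW z hlt
    linarith [hj.1, hj'.2]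

lemma rwsel_eq_iff (hW : ∀ y, 0 ≤ W y) (hK : ∀ y, rwMemL A y → ∑ j, rwq A W y j = 1)
    {z : ℕ → Fin N} (hz : rwMemL A z) {t : ℝ} (h0 : 0 ≤ t) (h1 : t < 1) (j : Fin N) :
    rwsel hN A W z t = j ↔ (rwS A W z j.val ≤ t ∧ t < rwS A W z (j.val+1)) := by
  have hex := rwsel_exists hW hK hz h0 h1
  constructor
  · intro hsel
    rw [rwsel, dif_pos hex] at hsel
    have hspec := hex.choose_spec
    rw [← hsel]
    exact ⟨hspec.2.1, hspec.2.2⟩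
  · intro hj
    rw [rwsel, dif_pos hex]
    have hspec := hex.choose_spec
    have : hex.choose = j.val := rwsel_unique hW ⟨hspec.2.1, hspec.2.2⟩ hj
    exact Fin.ext this

lemma rwsel_spec (hW : ∀ y, 0 ≤ W y) (hK : ∀ y, rwMemL A y → ∑ j, rwq A W y j = 1)
    {z : ℕ → Fin N} (hz : rwMemL A z) {t : ℝ} (h0 : 0 ≤ t) (h1 : t < 1) :
    rwS A W z (rwsel hN A W z t).val ≤ t ∧
      t < rwS A W z (rwsel hN A W z t).val + rwq A W z (rwsel hN A W z t) := by
  have := (rwsel_eq_iff hN hW hK hz h0 h1 (rwsel hN A W z t)).1 rfl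
  rwa [rwS_succ_fin] at this

lemma rwq_sel_pos (hW : ∀ y, 0 ≤ W y) (hK : ∀ y, rwMemL A y → ∑ j, rwq A W y j = 1)
    {z : ℕ → Fin N} (hz : rwMemL A z) {t : ℝ} (h0 : 0 ≤ t) (h1 : t < 1) :
    0 < rwq A W z (rwsel hN A W z t) := by
  obtain ⟨hle, hlt⟩ := rwsel_spec hN hW hK hz h0 h1
  nlinarith [rwq_nonneg (A:=A) hW z (rwsel hN A W z t)]

lemma rwstate_succ (z : ℕ → Fin N) (t : ℝ) (n : ℕ) :
    rwstate hN A W z t (n+1) =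
      (prepend (rwsel hN A W (rwstate hN A W z t n).1 (rwstate hN A W z t n).2)
          (rwstate hN A W z t n).1,
        ((rwstate hN A W z t n).2 -
            rwS A W (rwstate hN A W z t n).1
              (rwsel hN A W (rwstate hN A W z t n).1 (rwstate hN A W z t n).2)) /
          rwq A W (rwstate hN A W z t n).1
            (rwsel hN A W (rwstate hN A W z t n).1 (rwstate hN A W z t n).2)) := rfl

lemma rwstate_shift (z : ℕ → Fin N) (t : ℝ) (n : ℕ) :
    rwstate hN A W z t (n+1) =
      rwstate hN A W (rwstate hN A W z t 1).1 (rwstate hN A W z t 1).2 n := by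
  induction n with
  | zero => rfl
  | succ m ih => rw [rwstate_succ, ih, ← rwstate_succ]

lemma rwstate_inv (hA : ∀ i j, A i j = 0 ∨ A i j = 1) (hW : ∀ y, 0 ≤ W y)
    (hK : ∀ y, rwMemL A y → ∑ j, rwq A W y j = 1)
    {z : ℕ → Fin N} (hz : rwMemL A z) {t : ℝ} (h0 : 0 ≤ t) (h1 : t < 1) :
    ∀ n, rwMemL A (rwstate hN A W z t n).1 ∧
      0 ≤ (rwstate hN A W z t n).2 ∧ (rwstate hN A W z t n).2 < 1 := by
  intro n
  induction n with
  | zero => exact ⟨hz, h0, h1⟩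
  | succ m ih =>
    obtain ⟨hm, hm0, hm1⟩ := ih
    set p := rwstate hN A W z t m
    have hq : 0 < rwq A W p.1 (rwsel hN A W p.1 p.2) := rwq_sel_pos hN hW hK hm hm0 hm1
    have hspec := rwsel_spec hN hW hK hm hm0 hm1
    have hA1 : A (rwsel hN A W p.1 p.2) (p.1 0) = 1 := A_one_of_rwq_ne hA (ne_of_gt hq)
    rw [rwstate_succ]
    refine ⟨rwMemL_prepend hm hA1, ?_, ?_⟩
    · exact div_nonneg (by linarith [hspec.1]) hq.le
    · rw [div_lt_one hq]; linarith [hspec.2]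

lemma rwpr_nonneg (hW : ∀ y, 0 ≤ W y) : ∀ (l : List (Fin N)) (z), 0 ≤ rwpr A W z l := by
  intro l
  induction l with
  | nil => intro z; exact zero_le_one
  | cons j l ih =>
    intro z
    exact mul_nonneg (rwq_nonneg hW z j) (ih (prepend j z))

lemma rwoff_nonneg (hW : ∀ y, 0 ≤ W y) : ∀ (l : List (Fin N)) (z), 0 ≤ rwoff A W z l := by
  intro l
  induction l with
  | nil => intro z; exact le_refl 0
  | cons j l ih =>
    intro z
    exact add_nonneg (rwS_nonneg hW z j.val)
      (mul_nonneg (rwq_nonneg hW z j) (ih (prepend j z)))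

lemma rwoff_add_rwpr_le_one (hA : ∀ i j, A i j = 0 ∨ A i j = 1) (hW : ∀ y, 0 ≤ W y)
    (hK : ∀ y, rwMemL A y → ∑ j, rwq A W y j = 1) :
    ∀ (l : List (Fin N)) (z), rwMemL A z → rwoff A W z l + rwpr A W z l ≤ 1 := by
  intro l
  induction l with
  | nil => intro z hz; simp [rwoff, rwpr]
  | cons j l ih =>
    intro z hz
    have hSN : rwS A W z N = 1 := rwS_total hK z hz
    have hS1 : rwS A W z (j.val + 1) ≤ 1 := by
      rw [← hSN]; exact rwS_mono hW z j.isLt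
    have hfin := rwS_succ_fin (A := A) (W := W) z j
    by_cases hq : rwq A W z j = 0
    · simp only [rwoff, rwpr, hq, zero_mul, mul_zero, add_zero]
      have : rwS A W z j.val ≤ rwS A W z (j.val + 1) := rwS_mono hW z (Nat.le_succ _)
      linarith
    · have hqpos : 0 < rwq A W z j :=
        lt_of_le_of_ne (rwq_nonneg hW z j) (Ne.symm hq)
      have hz' : rwMemL A (prepend j z) := rwMemL_prepend hz (A_one_of_rwq_ne hA hq)
      have hih := ih (prepend j z) hz'
      simp only [rwoff, rwpr]
      nlinarith

lemma rwF_zero (z : ℕ → Fin N) (t : ℝ) : rwF hN A W z t 0 = rwsel hN A W z t := rfl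

lemma rwstate_one (z : ℕ → Fin N) (t : ℝ) :
    rwstate hN A W z t 1 =
      (prepend (rwsel hN A W z t) z,
        (t - rwS A W z (rwsel hN A W z t).val) / rwq A W z (rwsel hN A W z t)) := rfl

lemma rwF_shift (z : ℕ → Fin N) (t : ℝ) (i : ℕ) :
    rwF hN A W z t (i + 1) =
      rwF hN A W (prepend (rwsel hN A W z t) z)
        ((t - rwS A W z (rwsel hN A W z t).val) / rwq A W z (rwsel hN A W z t)) i := by
  unfold rwF
  rw [show i + 1 + 1 = (i + 1) + 1 from rfl, rwstate_shift hN z t (i + 1), rwstate_one]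

lemma rwmain (hA : ∀ i j, A i j = 0 ∨ A i j = 1) (hW : ∀ y, 0 ≤ W y)
    (hK : ∀ y, rwMemL A y → ∑ j, rwq A W y j = 1) :
    ∀ (l : List (Fin N)) (z : ℕ → Fin N), rwMemL A z → ∀ t : ℝ, 0 ≤ t → t < 1 →
      ((∀ i (hi : i < l.length), rwF hN A W z t i = l.get ⟨i, hi⟩) ↔
        (rwoff A W z l ≤ t ∧ t < rwoff A W z l + rwpr A W z l)) := by
  intro l
  induction l with
  | nil =>
    intro z hz t h0 h1
    simp only [rwoff, rwpr, List.length_nil, zero_add]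
    constructor
    · intro _; exact ⟨h0, h1⟩
    · intro _ i hi; exact absurd hi (by omega)
  | cons j l ih =>
    intro z hz t h0 h1
    have hsel := rwsel_spec hN hW hK hz h0 h1
    have hqselpos := rwq_sel_pos hN hW hK hz h0 h1
    by_cases hq : rwq A W z j = 0
    · -- both sides false
      constructor
      · intro hpre
        exfalso
        have h00 := hpre 0 (by simp)
        rw [rwF_zero] at h00
        simp only [List.get] at h00
        rw [h00] at hqselpos
        exact absurd hq (ne_of_gt hqselpos)
      · intro hb
        exfalso
        simp only [rwoff, rwpr, hq, zero_mul, mul_zero, add_zero] at hb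
        linarith [hb.1, hb.2]
    · have hqpos : 0 < rwq A W z j :=
        lt_of_le_of_ne (rwq_nonneg hW z j) (Ne.symm hq)
      have hz' : rwMemL A (prepend j z) := rwMemL_prepend hz (A_one_of_rwq_ne hA hq)
      have hoff' := rwoff_nonneg (A := A) hW l (prepend j z)
      have hpr' := rwpr_nonneg (A := A) hW l (prepend j z)
      have hle1 := rwoff_add_rwpr_le_one hA hW hK l (prepend j z) hz'
      have hRHSsel : (rwoff A W z (j :: l) ≤ t ∧
          t < rwoff A W z (j :: l) + rwpr A W z (j :: l)) → rwsel hN A W z t = j := by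
        intro hb
        simp only [rwoff, rwpr] at hb
        refine (rwsel_eq_iff hN hW hK hz h0 h1 j).2 ⟨?_, ?_⟩
        · nlinarith [hb.1]
        · rw [rwS_succ_fin]
          nlinarith [hb.2]
      constructor
      · intro hpre
        have h00 : rwsel hN A W z t = j := by
          have := hpre 0 (by simp)
          rw [rwF_zero] at this
          simpa using this
        rw [h00] at hsel
        set t₁ := (t - rwS A W z j.val) / rwq A W z j with ht₁
        have ht₁0 : 0 ≤ t₁ := div_nonneg (by linarith [hsel.1]) hqpos.le
        have ht₁1 : t₁ < 1 := by rw [ht₁, div_lt_one hqpos]; linarith [hsel.2]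
        have hpre' : ∀ i (hi : i < l.length),
            rwF hN A W (prepend j z) t₁ i = l.get ⟨i, hi⟩ := by
          intro i hi
          have := hpre (i + 1) (by simpa using Nat.succ_lt_succ hi)
          rw [rwF_shift, h00] at this
          simpa using this
        have hb := (ih (prepend j z) hz' t₁ ht₁0 ht₁1).1 hpre'
        have hb1 : rwoff A W (prepend j z) l ≤ t₁ := hb.1
        have hb2 : t₁ < rwoff A W (prepend j z) l + rwpr A W (prepend j z) l := hb.2
        rw [ht₁, le_div_iff₀ hqpos] at hb1
        rw [ht₁, div_lt_iff₀ hqpos] at hb2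
        simp only [rwoff, rwpr]
        constructor <;> nlinarith
      · intro hb
        have h00 : rwsel hN A W z t = j := hRHSsel hb
        simp only [rwoff, rwpr] at hb
        set t₁ := (t - rwS A W z j.val) / rwq A W z j with ht₁
        have hb1 : rwoff A W (prepend j z) l ≤ t₁ := by
          rw [ht₁, le_div_iff₀ hqpos]; nlinarith [hb.1]
        have hb2 : t₁ < rwoff A W (prepend j z) l + rwpr A W (prepend j z) l := by
          rw [ht₁, div_lt_iff₀ hqpos]; nlinarith [hb.2]
        have ht₁0 : 0 ≤ t₁ := le_trans hoff' hb1
        have ht₁1 : t₁ < 1 := lt_of_lt_of_le hb2 hle1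
        have hpre' := (ih (prepend j z) hz' t₁ ht₁0 ht₁1).2 ⟨hb1, hb2⟩
        intro i hi
        match i with
        | 0 => rw [rwF_zero, h00]; rfl
        | Nat.succ m =>
          rw [rwF_shift, h00]
          have hm : m < l.length := by simpa using hi
          rw [← ht₁]
          exact hpre' m hm

lemma rwF_chain (hA : ∀ i j, A i j = 0 ∨ A i j = 1) (hW : ∀ y, 0 ≤ W y)
    (hK : ∀ y, rwMemL A y → ∑ j, rwq A W y j = 1)
    {z : ℕ → Fin N} (hz : rwMemL A z) {t : ℝ} (h0 : 0 ≤ t) (h1 : t < 1) (n : ℕ) :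
    A (rwF hN A W z t (n + 1)) (rwF hN A W z t n) = 1 := by
  have hmem := (rwstate_inv hN hA hW hK hz h0 h1 (n + 2)).1
  have h := hmem 0
  have e1 : (rwstate hN A W z t (n + 2)).1 1 = (rwstate hN A W z t (n + 1)).1 0 := rfl
  rw [e1] at h
  exact h

lemma foldl_prepend_zero :
    ∀ (l : List (Fin N)) (h : l ≠ []) (z : ℕ → Fin N),
      (l.foldl (fun w i => prepend i w) z) 0 = l.getLast h := by
  intro l
  induction l with
  | nil => intro h; exact absurd rfl h
  | cons j l ih =>
    intro h z
    cases l with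
    | nil => rfl
    | cons k l' =>
      rw [List.foldl_cons, List.getLast_cons (by simp)]
      exact ih (by simp) (prepend j z)

lemma foldl_memL : ∀ (l : List (Fin N)) (z : ℕ → Fin N), rwMemL A z →
    List.Chain (fun u v => A v u = 1) (z 0) l →
    rwMemL A (l.foldl (fun w i => prepend i w) z) := by
  intro l
  induction l with
  | nil => intro z hz _; exact hz
  | cons j l ih =>
    intro z hz hc
    unfold List.Chain at hc
    rw [List.chain_cons] at hc
    rw [List.foldl_cons]
    refine ih (prepend j z) (rwMemL_prepend hz hc.1) ?_
    exact hc.2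

lemma prodW_append : ∀ (l : List (Fin N)) (z : ℕ → Fin N) (j : Fin N),
    prodW W z (l ++ [j]) = prodW W z l * W (prepend j (l.foldl (fun w i => prepend i w) z)) := by
  intro l
  induction l with
  | nil => intro z j; simp [prodW]
  | cons k l ih =>
    intro z j
    rw [List.cons_append]
    show W (prepend k z) * prodW W (prepend k z) (l ++ [j]) = _
    rw [ih (prepend k z) j, List.foldl_cons]
    show _ = W (prepend k z) * prodW W (prepend k z) l * _
    ring

lemma rwpr_eq_prodW (hA : ∀ i j, A i j = 0 ∨ A i j = 1) :
    ∀ (l : List (Fin N)) (j : Fin N) (z : ℕ → Fin N),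
      List.Chain' (fun u v => A v u = 1) (j :: l) →
      rwpr A W z (j :: l) = (A j (z 0) : ℝ) * prodW W z (j :: l) := by
  intro l
  induction l with
  | nil =>
    intro j z _
    show rwq A W z j * 1 = (A j (z 0) : ℝ) * (W (prepend j z) * 1)
    rw [rwq]; ring
  | cons k l ih =>
    intro j z hc
    unfold List.Chain' at hc
    rw [List.isChain_cons_cons] at hc
    show rwq A W z j * rwpr A W (prepend j z) (k :: l) = _
    rw [ih k (prepend j z) hc.2]
    show rwq A W z j * ((A k ((prepend j z) 0) : ℝ) * prodW W (prepend j z) (k :: l)) =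
      (A j (z 0) : ℝ) * (W (prepend j z) * prodW W (prepend j z) (k :: l))
    rw [prepend_zero, hc.1, rwq]
    push_cast
    ring

lemma rwEset (hA : ∀ i j, A i j = 0 ∨ A i j = 1) (hW : ∀ y, 0 ≤ W y)
    (hK : ∀ y, rwMemL A y → ∑ j, rwq A W y j = 1)
    {z : ℕ → Fin N} (hz : rwMemL A z) (l : List (Fin N)) :
    {t : ℝ | t ∈ Set.Ico (0:ℝ) 1 ∧
        ∀ i (hi : i < l.length), rwF hN A W z t i = l.get ⟨i, hi⟩}
      = Set.Ico (rwoff A W z l) (rwoff A W z l + rwpr A W z l) := by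
  ext t
  simp only [Set.mem_Ico, Set.mem_setOf_eq]
  constructor
  · rintro ⟨⟨h0, h1⟩, hpre⟩
    exact (rwmain hN hA hW hK l z hz t h0 h1).1 hpre
  · intro hb
    have h0 : 0 ≤ t := le_trans (rwoff_nonneg hW l z) hb.1
    have h1 : t < 1 := lt_of_lt_of_le hb.2 (rwoff_add_rwpr_le_one hA hW hK l z hz)
    exact ⟨⟨h0, h1⟩, (rwmain hN hA hW hK l z hz t h0 h1).2 hb⟩

lemma rwcoord_meas (hA : ∀ i j, A i j = 0 ∨ A i j = 1) (hW : ∀ y, 0 ≤ W y)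
    (hK : ∀ y, rwMemL A y → ∑ j, rwq A W y j = 1)
    {z : ℕ → Fin N} (hz : rwMemL A z) (n : ℕ) (j : Fin N) :
    MeasurableSet {t : ℝ | t ∈ Set.Ico (0:ℝ) 1 ∧ rwF hN A W z t n = j} := by
  have hEq : {t : ℝ | t ∈ Set.Ico (0:ℝ) 1 ∧ rwF hN A W z t n = j} =
      ⋃ (v : Fin (n+1) → Fin N) (_ : v ⟨n, Nat.lt_succ_self n⟩ = j),
        Set.Ico (rwoff A W z (List.ofFn v))
          (rwoff A W z (List.ofFn v) + rwpr A W z (List.ofFn v)) := by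
    ext t
    simp only [Set.mem_iUnion, Set.mem_setOf_eq]
    constructor
    · rintro ⟨ht, hFn⟩
      refine ⟨fun i => rwF hN A W z t i.val, hFn, ?_⟩
      rw [← rwEset hN hA hW hK hz (List.ofFn _)]
      refine ⟨ht, fun i hi => ?_⟩
      rw [List.get_ofFn]
      rfl
    · rintro ⟨v, hv, ht⟩
      rw [← rwEset hN hA hW hK hz (List.ofFn v)] at ht
      obtain ⟨htI, hpre⟩ := ht
      refine ⟨htI, ?_⟩
      have hn : n < (List.ofFn v).length := by simp
      have := hpre n hn
      rw [this, List.get_ofFn, ← hv]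
      rfl
  rw [hEq]
  exact MeasurableSet.iUnion fun v => MeasurableSet.iUnion fun _ => measurableSet_Ico
end RW


/-- If `W : Λ_A → ℝ≥0` satisfies the Keane condition, then for
`x ∈ Λ_A` the assignment `P^W_x(Λ_{k,A^t}(a)) = A_{a_1 x_1} W(σ_{a_1}(x)) ⋯
W(σ_{a_k}⋯σ_{a_1}(x))` on cylinders of `Λ_{A^t}` (for words `a` with `a^t` admissible
for `A`) is consistently defined:
`P^W_x(Λ_{k,A^t}(a)) = Σ_j (A^t)_{a_k j} P^W_x(Λ_{k+1,A^t}(aj))`,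
and hence extends to a Borel measure on `Λ_{A^t}`. -/
theorem random_walk_measure_consistency
    {N : ℕ} (hN : 0 < N) (A : Fin N → Fin N → ℕ)
    (hA01 : ∀ i j, A i j = 0 ∨ A i j = 1)
    (Λ : Set (ℕ → Fin N)) (hΛ : Λ = {w | ∀ n, A (w n) (w (n + 1)) = 1})
    (Λt : Set (ℕ → Fin N)) (hΛt : Λt = {w | ∀ n, A (w (n + 1)) (w n) = 1})
    (W : (ℕ → Fin N) → ℝ) (hWpos : ∀ y, 0 ≤ W y)
    -- the Keane condition for W on Λ_A
    (hKeane : ∀ y ∈ Λ, ∑ j, (A j (y 0) : ℝ) * W (prepend j y) = 1)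
    (x : ℕ → Fin N) (hx : x ∈ Λ) :
    -- consistency of the cylinder values of P^W_x
    (∀ (a : List (Fin N)) (ha : a ≠ []),
      List.Chain' (fun u v => A v u = 1) a →
      PW A W x a = ∑ j, (A j (a.getLast ha) : ℝ) * PW A W x (a ++ [j]))
    -- existence of an extending Borel measure on Λ_{A^t}
    ∧ (∃ ν : Measure (ℕ → Fin N), ν Λtᶜ = 0 ∧
        ∀ (a : List (Fin N)), a ≠ [] →
          List.Chain' (fun u v => A v u = 1) a →
          ν ({w | ∀ i : Fin a.length, w i = a.get i} ∩ Λt)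
            = ENNReal.ofReal (PW A W x a)) := by
  classical
  have hxm : rwMemL A x := by rw [hΛ] at hx; exact hx
  have hK : ∀ y, rwMemL A y → ∑ j, rwq A W y j = 1 := by
    intro y hy
    have := hKeane y (by rw [hΛ]; exact hy)
    simpa [rwq] using this
  -- `PW` equals `rwpr` on admissible words
  have hPWpr : ∀ (a : List (Fin N)), a ≠ [] →
      List.Chain' (fun u v => A v u = 1) a → rwpr A W x a = PW A W x a := by
    intro a ha hchain
    cases a with
    | nil => exact absurd rfl ha
    | cons h tl =>
      rw [rwpr_eq_prodW hA01 tl h x hchain]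
      rfl
  constructor
  · -- part 1 : consistency
    intro a ha hchain
    cases a with
    | nil => exact absurd rfl ha
    | cons h tl =>
      have happ : ∀ j : Fin N,
          PW A W x ((h :: tl) ++ [j]) = PW A W x (h :: tl) *
            W (prepend j ((h :: tl).foldl (fun w i => prepend i w) x)) := by
        intro j
        show (A h (x 0) : ℝ) * (W (prepend h x) * prodW W (prepend h x) (tl ++ [j]))
          = (A h (x 0) : ℝ) * (W (prepend h x) * prodW W (prepend h x) tl) * _
        rw [prodW_append, List.foldl_cons]
        ring
      have hF0 : ((h :: tl).foldl (fun w i => prepend i w) x) 0 = (h :: tl).getLast ha :=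
        foldl_prepend_zero _ ha x
      have hsum : ∑ j, (A j ((h :: tl).getLast ha) : ℝ) * PW A W x ((h :: tl) ++ [j])
          = PW A W x (h :: tl) *
            ∑ j, rwq A W ((h :: tl).foldl (fun w i => prepend i w) x) j := by
        rw [Finset.mul_sum]
        refine Finset.sum_congr rfl fun j _ => ?_
        rw [happ j, ← hF0, rwq]
        ring
      rcases hA01 h (x 0) with h0 | h1
      · have hPW0 : PW A W x (h :: tl) = 0 := by
          show (A h (x 0) : ℝ) * _ = 0
          rw [h0]; simp
        rw [hsum, hPW0, zero_mul]
      · have hch : List.Chain (fun u v => A v u = 1) (x 0) (h :: tl) :=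
          List.chain_cons.2 ⟨h1, hchain⟩
        have hFm : rwMemL A ((h :: tl).foldl (fun w i => prepend i w) x) :=
          foldl_memL _ x hxm hch
        rw [hsum, hK _ hFm, mul_one]
  · -- part 2 : existence of the measure
    obtain ⟨Fm, hFm⟩ : ∃ Fm : ℝ → ℕ → Fin N,
        Fm = fun t n => rwF hN A W x (if 0 ≤ t ∧ t < 1 then t else 0) n := ⟨_, rfl⟩
    have hmeasF : Measurable Fm := by
      rw [hFm]
      apply measurable_pi_lambda
      intro n
      apply measurable_to_countable'
      intro j
      have hset : (fun t : ℝ => rwF hN A W x (if 0 ≤ t ∧ t < 1 then t else 0) n) ⁻¹' {j}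
          = {t : ℝ | t ∈ Set.Ico (0:ℝ) 1 ∧ rwF hN A W x t n = j}
            ∪ ((Set.Ico (0:ℝ) 1)ᶜ ∩ {t : ℝ | rwF hN A W x 0 n = j}) := by
        ext t
        by_cases ht : 0 ≤ t ∧ t < 1
        · simp [ht, Set.mem_Ico]
        · simp [ht, Set.mem_Ico]
      rw [hset]
      refine (rwcoord_meas hN hA01 hWpos hK hxm n j).union
        (measurableSet_Ico.compl.inter ?_)
      by_cases h : rwF hN A W x 0 n = j
      · simp [h]
      · simp [h]
    have hΛtm : MeasurableSet Λt := by
      rw [hΛt]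
      have : {w : ℕ → Fin N | ∀ n, A (w (n + 1)) (w n) = 1}
          = ⋂ n, ⋃ (i : Fin N) (j : Fin N) (_ : A j i = 1),
              ((fun w : ℕ → Fin N => w n) ⁻¹' {i} ∩ (fun w : ℕ → Fin N => w (n+1)) ⁻¹' {j}) := by
        ext w
        simp only [Set.mem_setOf_eq, Set.mem_iInter, Set.mem_iUnion, Set.mem_inter_iff,
          Set.mem_preimage, Set.mem_singleton_iff]
        constructor
        · intro h n
          exact ⟨w n, w (n+1), h n, rfl, rfl⟩
        · intro h n
          obtain ⟨i, j, hij, hi, hj⟩ := h n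
          rw [hi, hj]
          exact hij
      rw [this]
      refine MeasurableSet.iInter fun n => ?_
      refine MeasurableSet.iUnion fun i => MeasurableSet.iUnion fun j =>
        MeasurableSet.iUnion fun _ => ?_
      exact ((measurable_pi_apply n) (measurableSet_singleton i)).inter
        ((measurable_pi_apply (n+1)) (measurableSet_singleton j))
    have hFmΛt : ∀ t ∈ Set.Ico (0:ℝ) 1, Fm t ∈ Λt := by
      intro t ht
      simp only [Set.mem_Ico] at ht
      rw [hΛt, hFm]
      intro n
      simp only [if_pos ht]
      exact rwF_chain hN hA01 hWpos hK hxm ht.1 ht.2 n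
    refine ⟨Measure.map Fm (volume.restrict (Set.Ico (0:ℝ) 1)), ?_, ?_⟩
    · rw [Measure.map_apply hmeasF hΛtm.compl,
        Measure.restrict_apply' measurableSet_Ico]
      rw [show Fm ⁻¹' Λtᶜ ∩ Set.Ico (0:ℝ) 1 = (∅ : Set ℝ) from ?_]
      · exact measure_empty
      · ext t
        simp only [Set.mem_inter_iff, Set.mem_preimage, Set.mem_compl_iff,
          Set.mem_empty_iff_false, iff_false, not_and]
        intro hc ht
        exact hc (hFmΛt t ht)
    · intro a ha hchain
      have hcylm : MeasurableSet {w : ℕ → Fin N | ∀ i : Fin a.length, w i = a.get i} := by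
        have : {w : ℕ → Fin N | ∀ i : Fin a.length, w i = a.get i}
            = ⋂ i : Fin a.length, (fun w : ℕ → Fin N => w i.val) ⁻¹' {a.get i} := by
          ext w; simp [Set.mem_iInter]
        rw [this]
        exact MeasurableSet.iInter fun i =>
          (measurable_pi_apply i.val) (measurableSet_singleton _)
      rw [Measure.map_apply hmeasF (hcylm.inter hΛtm),
        Measure.restrict_apply' measurableSet_Ico]
      have hpre : Fm ⁻¹' ({w | ∀ i : Fin a.length, w i = a.get i} ∩ Λt) ∩ Set.Ico (0:ℝ) 1
          = Set.Ico (rwoff A W x a) (rwoff A W x a + rwpr A W x a) := by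
        rw [← rwEset hN hA01 hWpos hK hxm a]
        ext t
        simp only [Set.mem_inter_iff, Set.mem_preimage, Set.mem_setOf_eq]
        constructor
        · rintro ⟨⟨hcyl, _⟩, ht⟩
          refine ⟨ht, fun i hi => ?_⟩
          have h2 := hcyl ⟨i, hi⟩
          have ht' : 0 ≤ t ∧ t < 1 := by simpa [Set.mem_Ico] using ht
          rw [hFm] at h2
          simp only [if_pos ht'] at h2
          exact h2
        · rintro ⟨ht, hp⟩
          refine ⟨⟨fun i => ?_, hFmΛt t ht⟩, ht⟩
          have h2 := hp i.val i.isLt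
          have ht' : 0 ≤ t ∧ t < 1 := by simpa [Set.mem_Ico] using ht
          rw [hFm]
          simp only [if_pos ht']
          exact h2
      rw [hpre, Real.volume_Ico]
      rw [show rwoff A W x a + rwpr A W x a - rwoff A W x a = rwpr A W x a by ring]
      rw [hPWpr a ha hchain]
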